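/- Let F be a field and let M be the linear finite transducer over F with structural matrices A ∈ M_{n×n}(F), B ∈ M_{n×ℓ}(F), C ∈ M_{m×n}(F), D ∈ M_{m×ℓ}(F), and let H(z) = C(I − Az)^{−1}Bz + D ∈ M_{m×ℓ}(F[[z]]) be its transfer function matrix. Let τ ∈ ℕ. Then M is injective with delay τ if and only if there exists a matrix H' ∈ M_{ℓ×m}(F[[z]]), all of whose entries lie in the image of the canonical embedding F[z]_S → F[[z]] (where S = 1 + zF[z]), such that H'·H = z^τ·I_ℓ. -/

import Mathlib

/-- Extension of the state transition function of a finite transducer to finite words. -/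
def deltaStar {X S : Type*} (δ : S → X → S) : S → List X → S
  | s, [] => s
  | s, a :: w => deltaStar δ (δ s a) w

/-- Extension of the output function of a finite transducer to finite words. -/
def lambdaStar {X Y S : Type*} (δ : S → X → S) (lam : S → X → Y) : S → List X → List Y
  | _, [] => []
  | s, a :: w => lam s a :: lambdaStar δ lam (δ s a) w

/-- A linear finite transducer over `F` with structural parameters `ℓ, m, n`, identified
with its quadruple of structural matrices `(A, B, C, D)`; its input alphabet is `F^ℓ`,
its output alphabet is `F^m` and its state space is `F^n`. -/
structure LFT (F : Type) [Field F] (ℓ m n : ℕ) where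
  A : Matrix (Fin n) (Fin n) F
  B : Matrix (Fin n) (Fin ℓ) F
  C : Matrix (Fin m) (Fin n) F
  D : Matrix (Fin m) (Fin ℓ) F

namespace LFT

variable {F : Type} [Field F] {ℓ m n n₁ n₂ : ℕ}

/-- The state transition function `δ(s, x) = As + Bx` of a linear finite transducer. -/
def del (M : LFT F ℓ m n) (s : Fin n → F) (x : Fin ℓ → F) : Fin n → F :=
  M.A.mulVec s + M.B.mulVec x

/-- The output function `λ(s, x) = Cs + Dx` of a linear finite transducer. -/
def out (M : LFT F ℓ m n) (s : Fin n → F) (x : Fin ℓ → F) : Fin m → F :=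
  M.C.mulVec s + M.D.mulVec x


end LFT

/-- A transducer is injective with delay `τ` (`τ`-injective) if for every state `s`,
inputs `x, x''` and input words `α, α''` of length `τ`, `λ(s, xα) = λ(s, x''α'')` implies
`x = x''`. -/
def TauInjective {X Y S : Type*} (δ : S → X → S) (lam : S → X → Y) (τ : ℕ) : Prop :=
  ∀ (s : S) (x x'' : X) (α α'' : List X), α.length = τ → α''.length = τ →
    lambdaStar δ lam s (x :: α) = lambdaStar δ lam s (x'' :: α'') → x = x''

/-- The matrix `Az` over `F[[z]]` associated to a square matrix `A` over `F`. -/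
noncomputable def zMat {F : Type} [Field F] {n : ℕ} (A : Matrix (Fin n) (Fin n) F) :
    Matrix (Fin n) (Fin n) (PowerSeries F) :=
  (PowerSeries.X : PowerSeries F) • A.map (PowerSeries.C (R := F))

/-- The transfer function matrix `H(z) = C (I − Az)⁻¹ B z + D` of an LFT (the matrix
`I − Az` is invertible over `F[[z]]` since its constant term is the identity). -/
noncomputable def transferMat {F : Type} [Field F] {ℓ m n : ℕ}
    (A : Matrix (Fin n) (Fin n) F) (B : Matrix (Fin n) (Fin ℓ) F)
    (C : Matrix (Fin m) (Fin n) F) (D : Matrix (Fin m) (Fin ℓ) F) :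
    Matrix (Fin m) (Fin ℓ) (PowerSeries F) :=
  (PowerSeries.X : PowerSeries F) •
      (C.map (PowerSeries.C (R := F)) * (1 - zMat A)⁻¹ * B.map (PowerSeries.C (R := F))) +
    D.map (PowerSeries.C (R := F))


section Aux
open PowerSeries Matrix
variable {F : Type} [Field F]


variable {F : Type} [Field F]

/-- A power series is rational with denominator a unit at 0. -/
def IsRatPS (f : PowerSeries F) : Prop :=
  ∃ p g : Polynomial F, g.coeff 0 = 1 ∧
    f = (p : PowerSeries F) * (g : PowerSeries F)⁻¹

lemma constCoeff_coe (g : Polynomial F) :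
    PowerSeries.constantCoeff (R := F) (g : PowerSeries F) = g.coeff 0 := by
  rw [← PowerSeries.coeff_zero_eq_constantCoeff_apply, Polynomial.coeff_coe]

lemma isRatPS_iff {f : PowerSeries F} :
    IsRatPS f ↔ ∃ p g : Polynomial F, g.coeff 0 = 1 ∧
      f * (g : PowerSeries F) = (p : PowerSeries F) := by
  constructor
  · rintro ⟨p, g, hg, rfl⟩
    exact ⟨p, g, hg, by
      rw [mul_assoc, PowerSeries.inv_mul_cancel _ (by rw [constCoeff_coe, hg]; exact one_ne_zero),
        mul_one]⟩
  · rintro ⟨p, g, hg, h⟩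
    exact ⟨p, g, hg, by
      rw [← h, mul_assoc, PowerSeries.mul_inv_cancel _
        (by rw [constCoeff_coe, hg]; exact one_ne_zero), mul_one]⟩

lemma IsRatPS.add {f₁ f₂ : PowerSeries F} (h₁ : IsRatPS f₁) (h₂ : IsRatPS f₂) :
    IsRatPS (f₁ + f₂) := by
  rw [isRatPS_iff] at h₁ h₂ ⊢
  obtain ⟨p₁, g₁, hg₁, h₁⟩ := h₁
  obtain ⟨p₂, g₂, hg₂, h₂⟩ := h₂
  refine ⟨p₁ * g₂ + p₂ * g₁, g₁ * g₂, by simp [Polynomial.mul_coeff_zero, hg₁, hg₂], ?_⟩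
  push_cast [Polynomial.coe_mul, Polynomial.coe_add]
  calc (f₁ + f₂) * ((g₁ : PowerSeries F) * (g₂ : PowerSeries F))
      = (f₁ * g₁) * g₂ + (f₂ * g₂) * g₁ := by ring
    _ = (p₁ : PowerSeries F) * g₂ + (p₂ : PowerSeries F) * g₁ := by rw [h₁, h₂]

lemma IsRatPS.mul {f₁ f₂ : PowerSeries F} (h₁ : IsRatPS f₁) (h₂ : IsRatPS f₂) :
    IsRatPS (f₁ * f₂) := by
  rw [isRatPS_iff] at h₁ h₂ ⊢
  obtain ⟨p₁, g₁, hg₁, h₁⟩ := h₁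
  obtain ⟨p₂, g₂, hg₂, h₂⟩ := h₂
  refine ⟨p₁ * p₂, g₁ * g₂, by simp [Polynomial.mul_coeff_zero, hg₁, hg₂], ?_⟩
  push_cast [Polynomial.coe_mul]
  calc (f₁ * f₂) * ((g₁ : PowerSeries F) * (g₂ : PowerSeries F))
      = (f₁ * g₁) * (f₂ * g₂) := by ring
    _ = _ := by rw [h₁, h₂]

lemma IsRatPS.neg {f : PowerSeries F} (h : IsRatPS f) : IsRatPS (-f) := by
  rw [isRatPS_iff] at h ⊢
  obtain ⟨p, g, hg, h⟩ := h
  exact ⟨-p, g, hg, by push_cast [Polynomial.coe_neg]; rw [neg_mul, h]⟩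

lemma isRatPS_coe (p : Polynomial F) : IsRatPS (p : PowerSeries F) := by
  rw [isRatPS_iff]
  exact ⟨p, 1, by simp, by simp [Polynomial.coe_one]⟩

lemma isRatPS_one : IsRatPS (1 : PowerSeries F) := by
  simpa using isRatPS_coe (1 : Polynomial F)

lemma isRatPS_zero : IsRatPS (0 : PowerSeries F) := by
  simpa using isRatPS_coe (0 : Polynomial F)

lemma isRatPS_X : IsRatPS (X : PowerSeries F) := by
  simpa [Polynomial.coe_X] using isRatPS_coe (Polynomial.X : Polynomial F)

lemma isRatPS_C (c : F) : IsRatPS (PowerSeries.C (R := F) c) := by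
  simpa [Polynomial.coe_C] using isRatPS_coe (Polynomial.C c : Polynomial F)

/-- The rational power series form a subring. -/
def ratSubring (F : Type) [Field F] : Subring (PowerSeries F) where
  carrier := {f | IsRatPS f}
  zero_mem' := isRatPS_zero
  one_mem' := isRatPS_one
  add_mem' := fun h₁ h₂ => h₁.add h₂
  mul_mem' := fun h₁ h₂ => h₁.mul h₂
  neg_mem' := fun h => h.neg

lemma mem_ratSubring {f : PowerSeries F} : f ∈ ratSubring F ↔ IsRatPS f := Iff.rfl

/-- inverse closure -/
lemma IsRatPS.of_mul_eq_one {f h : PowerSeries F} (hf : IsRatPS f) (hfh : f * h = 1) :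
    IsRatPS h := by
  have hc : PowerSeries.constantCoeff (R := F) f * PowerSeries.constantCoeff (R := F) h = 1 := by
    rw [← _root_.map_mul, hfh, _root_.map_one]
  have hcf : PowerSeries.constantCoeff (R := F) f ≠ 0 := left_ne_zero_of_mul_eq_one hc
  rw [isRatPS_iff] at hf ⊢
  obtain ⟨p, g, hg, hfp⟩ := hf
  have hp0 : p.coeff 0 = PowerSeries.constantCoeff (R := F) f := by
    rw [← constCoeff_coe, ← hfp, _root_.map_mul, constCoeff_coe g, hg, mul_one]
  set c := p.coeff 0 with hcdef
  have hc0 : c ≠ 0 := hp0 ▸ hcf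
  refine ⟨Polynomial.C c⁻¹ * g, Polynomial.C c⁻¹ * p, by simp [← hcdef, hc0], ?_⟩
  have hgp : (g : PowerSeries F) = h * p := by
    have := congrArg (h * ·) hfp
    simp only [← mul_assoc] at this
    rw [mul_comm h f, hfh, one_mul] at this
    exact this
  push_cast [Polynomial.coe_mul, Polynomial.coe_C]
  rw [mul_comm (PowerSeries.C (R := F) c⁻¹) (p : PowerSeries F), ← mul_assoc, hgp]
  ring
section MatrixRat
variable {k : ℕ}

lemma isRatPS_det {A : Matrix (Fin k) (Fin k) (PowerSeries F)}
    (h : ∀ i j, IsRatPS (A i j)) : IsRatPS A.det := by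
  set A' : Matrix (Fin k) (Fin k) (ratSubring F) :=
    Matrix.of fun i j => (⟨A i j, mem_ratSubring.2 (h i j)⟩ : ratSubring F) with hA'
  have hmap : A = A'.map (ratSubring F).subtype := by
    ext i j; rfl
  rw [hmap, show A'.map ⇑(ratSubring F).subtype = (ratSubring F).subtype.mapMatrix A' from rfl,
    ← RingHom.map_det]
  exact mem_ratSubring.1 (A'.det).2

lemma isRatPS_adjugate {A : Matrix (Fin k) (Fin k) (PowerSeries F)}
    (h : ∀ i j, IsRatPS (A i j)) (i j : Fin k) : IsRatPS (A.adjugate i j) := by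
  set A' : Matrix (Fin k) (Fin k) (ratSubring F) :=
    Matrix.of fun i j => (⟨A i j, mem_ratSubring.2 (h i j)⟩ : ratSubring F) with hA'
  have hmap : A = A'.map (ratSubring F).subtype := by ext i j; rfl
  rw [hmap, show A'.map ⇑(ratSubring F).subtype = (ratSubring F).subtype.mapMatrix A' from rfl,
    ← RingHom.map_adjugate]
  exact mem_ratSubring.1 (A'.adjugate i j).2

lemma isRatPS_inv_entry {A : Matrix (Fin k) (Fin k) (PowerSeries F)}
    (h : ∀ i j, IsRatPS (A i j)) (hdet : PowerSeries.constantCoeff (R := F) A.det ≠ 0)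
    (i j : Fin k) : IsRatPS (A⁻¹ i j) := by
  have hu : IsUnit A.det := PowerSeries.isUnit_iff_constantCoeff.2 (isUnit_iff_ne_zero.2 hdet)
  rw [Matrix.inv_def, Matrix.smul_apply, smul_eq_mul]
  have h1 : A.det * Ring.inverse A.det = 1 := Ring.mul_inverse_cancel _ hu
  exact ((isRatPS_det h).of_mul_eq_one h1).mul (isRatPS_adjugate h i j)

end MatrixRat

variable {ℓ m n : ℕ}


/-- Taylor coefficients of the transfer function matrix. -/
def Hc (A : Matrix (Fin n) (Fin n) F) (B : Matrix (Fin n) (Fin ℓ) F)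
    (C : Matrix (Fin m) (Fin n) F) (D : Matrix (Fin m) (Fin ℓ) F) : ℕ → Matrix (Fin m) (Fin ℓ) F
  | 0 => D
  | (k+1) => C * A ^ k * B

/-- The resolvPS `(1 - Az)⁻¹ = ∑ A^k z^k`. -/
noncomputable def resolvPS (A : Matrix (Fin n) (Fin n) F) :
    Matrix (Fin n) (Fin n) (PowerSeries F) :=
  Matrix.of fun i j => PowerSeries.mk fun k => (A ^ k) i j

lemma one_sub_zMat_mul_resolvent (A : Matrix (Fin n) (Fin n) F) :
    (1 - zMat A) * resolvPS A = 1 := by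
  ext i j k
  rw [sub_mul, one_mul, Matrix.sub_apply, map_sub]
  have hz : (zMat A * resolvPS A) i j = ∑ a, PowerSeries.X * (PowerSeries.C (R := F) (A i a) *
      PowerSeries.mk fun k => (A ^ k) a j) := by
    rw [Matrix.mul_apply]
    refine Finset.sum_congr rfl fun a _ => ?_
    simp [zMat, resolvPS, Matrix.smul_apply, smul_eq_mul, mul_assoc]
  rw [hz, map_sum]
  rcases k with _ | k'
  · simp [resolvPS, Matrix.one_apply, PowerSeries.coeff_zero_eq_constantCoeff]
  · have : ∀ a : Fin n, (PowerSeries.coeff (R := F) (k' + 1)) (PowerSeries.X * (PowerSeries.C (R := F) (A i a) *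
        PowerSeries.mk fun k => (A ^ k) a j)) = A i a * (A ^ k') a j := by
      intro a
      rw [PowerSeries.coeff_succ_X_mul, PowerSeries.coeff_C_mul, PowerSeries.coeff_mk]
    rw [Finset.sum_congr rfl fun a _ => this a]
    have h1 : (PowerSeries.coeff (R := F) (k' + 1)) ((1 : Matrix (Fin n) (Fin n) (PowerSeries F)) i j)
        = 0 := by
      rcases eq_or_ne i j with rfl | hij
      · simp [Matrix.one_apply]
      · simp [Matrix.one_apply, hij]
    rw [h1]
    simp only [resolvPS, Matrix.of_apply, PowerSeries.coeff_mk]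
    rw [show (A ^ (k' + 1)) i j = ∑ a, A i a * (A ^ k') a j by
      rw [pow_succ']; exact Matrix.mul_apply]
    simp

lemma inv_one_sub_zMat (A : Matrix (Fin n) (Fin n) F) :
    (1 - zMat A)⁻¹ = resolvPS A :=
  Matrix.inv_eq_right_inv (one_sub_zMat_mul_resolvent A)

lemma transfer_coeff (A : Matrix (Fin n) (Fin n) F) (B : Matrix (Fin n) (Fin ℓ) F)
    (C : Matrix (Fin m) (Fin n) F) (D : Matrix (Fin m) (Fin ℓ) F) (k : ℕ)
    (i : Fin m) (j : Fin ℓ) :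
    PowerSeries.coeff (R := F) k (transferMat A B C D i j) = Hc A B C D k i j := by
  rw [transferMat, inv_one_sub_zMat, Matrix.add_apply, Matrix.smul_apply, smul_eq_mul, map_add]
  have hentry : (C.map (PowerSeries.C (R := F)) * resolvPS A * B.map (PowerSeries.C (R := F))) i j
      = ∑ b, (∑ a, PowerSeries.C (R := F) (C i a) * PowerSeries.mk (fun k => (A ^ k) a b)) *
          PowerSeries.C (R := F) (B b j) := by
    rw [Matrix.mul_apply]
    refine Finset.sum_congr rfl fun b _ => ?_
    rw [Matrix.mul_apply]
    rfl
  rcases k with _ | k'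
  · rw [PowerSeries.coeff_zero_eq_constantCoeff_apply, _root_.map_mul,
      PowerSeries.constantCoeff_X, zero_mul, zero_add]
    simp [Hc, Matrix.map_apply]
  · rw [hentry, PowerSeries.coeff_succ_X_mul]
    have : (PowerSeries.coeff (R := F) (k' + 1)) ((D.map (PowerSeries.C (R := F))) i j) = 0 := by
      simp [Matrix.map_apply]
    rw [this, add_zero, map_sum]
    have hterm : ∀ b, (PowerSeries.coeff (R := F) k')
        ((∑ a, PowerSeries.C (R := F) (C i a) * PowerSeries.mk (fun k => (A ^ k) a b)) *
          PowerSeries.C (R := F) (B b j)) = (∑ a, C i a * (A ^ k') a b) * B b j := by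
      intro b
      rw [PowerSeries.coeff_mul_C, map_sum]
      congr 1
      refine Finset.sum_congr rfl fun a _ => ?_
      rw [PowerSeries.coeff_C_mul, PowerSeries.coeff_mk]
    rw [Finset.sum_congr rfl fun b _ => hterm b]
    show _ = (C * A ^ k' * B) i j
    rw [Matrix.mul_apply]
    refine Finset.sum_congr rfl fun b _ => ?_
    rw [Matrix.mul_apply]

lemma isRatPS_transfer (A : Matrix (Fin n) (Fin n) F) (B : Matrix (Fin n) (Fin ℓ) F)
    (C : Matrix (Fin m) (Fin n) F) (D : Matrix (Fin m) (Fin ℓ) F) (i : Fin m) (j : Fin ℓ) :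
    IsRatPS (transferMat A B C D i j) := by
  have hZ : ∀ a b, IsRatPS ((1 - zMat A) a b) := by
    intro a b
    have : (1 - zMat A) a b = (1 : Matrix (Fin n) (Fin n) (PowerSeries F)) a b
        - PowerSeries.X * PowerSeries.C (R := F) (A a b) := by
      simp [zMat, Matrix.sub_apply, Matrix.smul_apply, smul_eq_mul]
    rw [this]
    rcases eq_or_ne a b with rfl | hab
    · simpa [Matrix.one_apply, sub_eq_add_neg] using
        (isRatPS_one.add ((isRatPS_X.mul (isRatPS_C (A a a))).neg))
    · simpa [Matrix.one_apply, hab, sub_eq_add_neg] using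
        (isRatPS_zero.add ((isRatPS_X.mul (isRatPS_C (A a b))).neg))
  have hdet : PowerSeries.constantCoeff (R := F) (1 - zMat A).det ≠ 0 := by
    have hmap : ((1 - zMat A).map (PowerSeries.constantCoeff (R := F)))
        = (1 : Matrix (Fin n) (Fin n) F) := by
      ext a b
      rcases eq_or_ne a b with rfl | hab
      · simp [zMat, Matrix.one_apply, Matrix.sub_apply, Matrix.smul_apply, smul_eq_mul]
      · simp [zMat, Matrix.one_apply, hab, Matrix.sub_apply, Matrix.smul_apply, smul_eq_mul]
    have : PowerSeries.constantCoeff (R := F) (1 - zMat A).det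
        = ((1 - zMat A).map (PowerSeries.constantCoeff (R := F))).det := by
      rw [show (1 - zMat A).map ⇑(PowerSeries.constantCoeff (R := F))
          = (PowerSeries.constantCoeff (R := F)).mapMatrix (1 - zMat A) from rfl, ← RingHom.map_det]
    rw [this, hmap, Matrix.det_one]
    exact one_ne_zero
  have hinv : ∀ a b, IsRatPS ((1 - zMat A)⁻¹ a b) := isRatPS_inv_entry hZ hdet
  rw [transferMat]
  have hentry : (((PowerSeries.X : PowerSeries F) • (C.map (PowerSeries.C (R := F)) * (1 - zMat A)⁻¹ *
        B.map (PowerSeries.C (R := F))) + D.map (PowerSeries.C (R := F))) :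
          Matrix (Fin m) (Fin ℓ) (PowerSeries F)) i j
      = PowerSeries.X * (∑ b, (∑ a, PowerSeries.C (R := F) (C i a) * (1 - zMat A)⁻¹ a b) *
          PowerSeries.C (R := F) (B b j)) + PowerSeries.C (R := F) (D i j) := by
    have hsum : (C.map (PowerSeries.C (R := F)) * (1 - zMat A)⁻¹ * B.map (PowerSeries.C (R := F))) i j
        = ∑ b, (∑ a, PowerSeries.C (R := F) (C i a) * (1 - zMat A)⁻¹ a b) *
            PowerSeries.C (R := F) (B b j) := by
      rw [Matrix.mul_apply]
      refine Finset.sum_congr rfl fun b _ => ?_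
      rw [Matrix.mul_apply]
      rfl
    rw [Matrix.add_apply, Matrix.smul_apply, smul_eq_mul, hsum, Matrix.map_apply]
  rw [hentry]
  refine (isRatPS_X.mul ?_).add (isRatPS_C _)
  have : (∑ b, (∑ a, PowerSeries.C (R := F) (C i a) * (1 - zMat A)⁻¹ a b) * PowerSeries.C (R := F) (B b j))
      ∈ ratSubring F := by
    refine Subring.sum_mem _ fun b _ => Subring.mul_mem _ ?_ (mem_ratSubring.2 (isRatPS_C _))
    exact Subring.sum_mem _ fun a _ => Subring.mul_mem _ (mem_ratSubring.2 (isRatPS_C _))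
      (mem_ratSubring.2 (hinv a b))
  exact mem_ratSubring.1 this

end Aux


section Words
open Matrix
variable {F : Type} [Field F] {ℓ m n : ℕ}

lemma lambdaStar_length {X Y S : Type*} (δ : S → X → S) (lam : S → X → Y) :
    ∀ (w : List X) (s : S), (lambdaStar δ lam s w).length = w.length
  | [], _ => rfl
  | a :: w, s => by
    simp only [lambdaStar, List.length_cons, lambdaStar_length δ lam w (δ s a)]

lemma lambdaStar_getD (M : LFT F ℓ m n) :
    ∀ (w : List (Fin ℓ → F)) (s : Fin n → F) (t : ℕ), t < w.length →
      (lambdaStar M.del M.out s w).getD t 0 =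
        M.C.mulVec ((M.A ^ t).mulVec s) +
          ∑ d ∈ Finset.range (t + 1), (Hc M.A M.B M.C M.D (t - d)).mulVec (w.getD d 0)
  | [], s, t, ht => by simp at ht
  | a :: w, s, 0, ht => by
    show M.out s a = _
    rw [Finset.sum_range_one]
    simp only [Nat.sub_zero, pow_zero, Matrix.one_mulVec, List.getD_cons_zero]
    rfl
  | a :: w, s, t + 1, ht => by
    have hlen : t < w.length := by simpa using ht
    have IH := lambdaStar_getD M w (M.del s a) t hlen
    simp only [lambdaStar, List.getD_cons_succ]
    rw [IH]
    have hdel : (M.A ^ t).mulVec (M.del s a)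
        = (M.A ^ (t + 1)).mulVec s + ((M.A ^ t) * M.B).mulVec a := by
      rw [LFT.del, Matrix.mulVec_add, Matrix.mulVec_mulVec, Matrix.mulVec_mulVec, ← pow_succ]
    rw [hdel, Matrix.mulVec_add]
    have hsplit : ∑ d ∈ Finset.range (t + 1 + 1),
        (Hc M.A M.B M.C M.D (t + 1 - d)).mulVec ((a :: w).getD d 0)
        = (Hc M.A M.B M.C M.D (t + 1)).mulVec a +
          ∑ d ∈ Finset.range (t + 1), (Hc M.A M.B M.C M.D (t - d)).mulVec (w.getD d 0) := by
      rw [Finset.sum_range_succ']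
      simp only [List.getD_cons_zero, List.getD_cons_succ, Nat.sub_zero]
      rw [add_comm]
      congr 1
      refine Finset.sum_congr rfl fun d hd => ?_
      have hde : t + 1 - (d + 1) = t - d := by omega
      rw [hde]
    have hCA : M.C.mulVec (((M.A ^ t) * M.B).mulVec a)
        = (Hc M.A M.B M.C M.D (t + 1)).mulVec a := by
      rw [Matrix.mulVec_mulVec]
      show _ = (M.C * M.A ^ t * M.B).mulVec a
      rw [Matrix.mul_assoc]
    rw [hsplit]
    abel_nf
    rw [hCA]
    abel

end Words


section Ker
open Matrix
variable {F : Type} [Field F] {ℓ m n : ℕ}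

/-- The kernel-type condition equivalent to `τ`-injectivity. -/
def GoodKer (M : LFT F ℓ m n) (τ : ℕ) : Prop :=
  ∀ w : ℕ → Fin ℓ → F,
    (∀ t ≤ τ, ∑ d ∈ Finset.range (t + 1), (Hc M.A M.B M.C M.D (t - d)).mulVec (w d) = 0) →
    w 0 = 0

lemma goodKer_of_tauInjective (M : LFT F ℓ m n) (τ : ℕ)
    (h : TauInjective M.del M.out τ) : GoodKer M τ := by
  intro w hw
  set x := w 0 with hx
  set α : List (Fin ℓ → F) := List.ofFn (fun i : Fin τ => w (i + 1)) with hα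
  have hlen : α.length = τ := by simp [hα]
  have hget1 : ∀ d ≤ τ, (x :: α).getD d 0 = w d := by
    intro d hd
    rcases d with _ | d'
    · rfl
    · have hd' : d' < α.length := by omega
      rw [List.getD_cons_succ, α.getD_eq_getElem 0 hd']
      simp [hα]
  have hget2 : ∀ d : ℕ, ((0 : Fin ℓ → F) :: List.replicate τ 0).getD d 0 = 0 := by
    intro d
    rcases d with _ | d'
    · rfl
    · rw [List.getD_cons_succ]
      rcases lt_or_ge d' τ with hlt | hge
      · rw [List.getD_eq_getElem _ _ (by simpa using hlt)]
        simp
      · rw [List.getD_eq_default]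
        simpa using hge
  have hL : lambdaStar M.del M.out 0 (x :: α)
      = lambdaStar M.del M.out 0 ((0 : Fin ℓ → F) :: List.replicate τ 0) := by
    apply List.ext_getElem
    · simp [lambdaStar_length, hlen]
    · intro t h1 h2
      have ht : t ≤ τ := by
        have := h1
        rw [lambdaStar_length] at this
        simp [hlen] at this
        omega
      rw [← List.getD_eq_getElem _ 0 h1, ← List.getD_eq_getElem _ 0 h2,
        lambdaStar_getD M _ _ t (by simp [hlen]; omega),
        lambdaStar_getD M _ _ t (by simp; omega)]
      rw [Matrix.mulVec_zero, Matrix.mulVec_zero]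
      congr 1
      have e1 : ∑ d ∈ Finset.range (t + 1),
          (Hc M.A M.B M.C M.D (t - d)).mulVec ((x :: α).getD d 0)
          = ∑ d ∈ Finset.range (t + 1), (Hc M.A M.B M.C M.D (t - d)).mulVec (w d) :=
        Finset.sum_congr rfl fun d hd => by
          rw [hget1 d (by simp at hd; omega)]
      have e2 : ∑ d ∈ Finset.range (t + 1),
          (Hc M.A M.B M.C M.D (t - d)).mulVec
            (((0 : Fin ℓ → F) :: List.replicate τ 0).getD d 0) = 0 :=
        Finset.sum_eq_zero fun d _ => by rw [hget2 d, Matrix.mulVec_zero]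
      rw [e1, e2, hw t ht]
  exact h 0 x 0 α (List.replicate τ 0) hlen (by simp) hL

lemma tauInjective_of_goodKer (M : LFT F ℓ m n) (τ : ℕ)
    (h : GoodKer M τ) : TauInjective M.del M.out τ := by
  intro s x x'' α α'' hα hα'' heq
  set w : ℕ → Fin ℓ → F :=
    fun k => (x :: α).getD k 0 - (x'' :: α'').getD k 0 with hwdef
  have hw0 : w 0 = x - x'' := rfl
  have hsum : ∀ t ≤ τ,
      ∑ d ∈ Finset.range (t + 1), (Hc M.A M.B M.C M.D (t - d)).mulVec (w d) = 0 := by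
    intro t ht
    have h1 : t < (x :: α).length := by simp [hα]; omega
    have h2 : t < (x'' :: α'').length := by simp [hα'']; omega
    have hgd : (lambdaStar M.del M.out s (x :: α)).getD t 0
        = (lambdaStar M.del M.out s (x'' :: α'')).getD t 0 := by rw [heq]
    rw [lambdaStar_getD M _ _ t h1, lambdaStar_getD M _ _ t h2] at hgd
    have hgd' := add_left_cancel hgd
    have : ∀ d, (Hc M.A M.B M.C M.D (t - d)).mulVec (w d)
        = (Hc M.A M.B M.C M.D (t - d)).mulVec ((x :: α).getD d 0)
          - (Hc M.A M.B M.C M.D (t - d)).mulVec ((x'' :: α'').getD d 0) := by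
      intro d
      rw [hwdef]
      rw [Matrix.mulVec_sub]
    rw [Finset.sum_congr rfl fun d _ => this d, Finset.sum_sub_distrib, hgd', sub_self]
  have := h w hsum
  rw [hw0] at this
  exact sub_eq_zero.1 this

end Ker


section Coeffs
open PowerSeries Matrix
variable {F : Type} [Field F] {ℓ m n : ℕ}

lemma coeff_wordSeries (τ : ℕ) (c : ℕ → F) (d : ℕ) (hd : d ≤ τ) :
    PowerSeries.coeff (R := F) d (∑ k ∈ Finset.range (τ + 1),
      PowerSeries.C (R := F) (c k) * (PowerSeries.X : PowerSeries F) ^ k) = c d := by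
  rw [map_sum]
  rw [Finset.sum_congr rfl fun k _ => PowerSeries.coeff_C_mul_X_pow (c k) k d]
  rw [Finset.sum_ite_eq (Finset.range (τ + 1)) d c, if_pos (Finset.mem_range.2 (by omega))]

lemma coeff_tmul (M : LFT F ℓ m n) (τ : ℕ) (w : ℕ → Fin ℓ → F) (b : Fin m) (t : ℕ)
    (ht : t ≤ τ) :
    PowerSeries.coeff (R := F) t (∑ a, transferMat M.A M.B M.C M.D b a *
        (∑ k ∈ Finset.range (τ + 1),
          PowerSeries.C (R := F) (w k a) * (PowerSeries.X : PowerSeries F) ^ k))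
      = (∑ d ∈ Finset.range (t + 1), (Hc M.A M.B M.C M.D (t - d)).mulVec (w d)) b := by
  rw [map_sum]
  have hterm : ∀ a, PowerSeries.coeff (R := F) t (transferMat M.A M.B M.C M.D b a *
      (∑ k ∈ Finset.range (τ + 1),
        PowerSeries.C (R := F) (w k a) * (PowerSeries.X : PowerSeries F) ^ k))
      = ∑ k ∈ Finset.range (t + 1), Hc M.A M.B M.C M.D k b a * w (t - k) a := by
    intro a
    rw [PowerSeries.coeff_mul, Finset.Nat.sum_antidiagonal_eq_sum_range_succ_mk]
    refine Finset.sum_congr rfl fun k hk => ?_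
    rw [transfer_coeff, coeff_wordSeries τ (fun k => w k a) (t - k) (by omega)]
  rw [Finset.sum_congr rfl fun a _ => hterm a, Finset.sum_comm]
  have hmv : ∀ d : ℕ, ((Hc M.A M.B M.C M.D (t - d)).mulVec (w d)) b
      = ∑ a, Hc M.A M.B M.C M.D (t - d) b a * w d a := fun d => rfl
  rw [Finset.sum_apply]
  rw [Finset.sum_congr rfl fun d _ => hmv d]
  rw [← Finset.sum_range_reflect
    (fun d => ∑ a, Hc M.A M.B M.C M.D (t - d) b a * w d a) (t + 1)]
  refine Finset.sum_congr rfl fun k hk => ?_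
  have hk' : k ≤ t := by simp at hk; omega
  have h1 : t + 1 - 1 - k = t - k := by omega
  have h2 : t - (t - k) = k := by omega
  rw [h1, h2]

lemma goodKer_of_leftInv (M : LFT F ℓ m n) (τ : ℕ)
    (H' : Matrix (Fin ℓ) (Fin m) (PowerSeries F))
    (hH' : H' * transferMat M.A M.B M.C M.D =
      ((PowerSeries.X : PowerSeries F) ^ τ) • (1 : Matrix (Fin ℓ) (Fin ℓ) (PowerSeries F))) :
    GoodKer M τ := by
  intro w h0
  funext j
  set u : Fin ℓ → PowerSeries F := fun a => ∑ k ∈ Finset.range (τ + 1),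
    PowerSeries.C (R := F) (w k a) * (PowerSeries.X : PowerSeries F) ^ k with hu
  have key : (∑ a, (H' * transferMat M.A M.B M.C M.D) j a * u a)
      = (PowerSeries.X : PowerSeries F) ^ τ * u j := by
    rw [hH']
    have : ∀ a : Fin ℓ, (((PowerSeries.X : PowerSeries F) ^ τ) •
        (1 : Matrix (Fin ℓ) (Fin ℓ) (PowerSeries F))) j a * u a
        = if j = a then (PowerSeries.X : PowerSeries F) ^ τ * u a else 0 := by
      intro a
      rw [Matrix.smul_apply, smul_eq_mul, Matrix.one_apply]
      split_ifs <;> simp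
    rw [Finset.sum_congr rfl fun a _ => this a,
      Finset.sum_ite_eq Finset.univ j (fun a => (PowerSeries.X : PowerSeries F) ^ τ * u a),
      if_pos (Finset.mem_univ j)]
  have hc1 : PowerSeries.coeff (R := F) τ ((PowerSeries.X : PowerSeries F) ^ τ * u j) = w 0 j := by
    rw [PowerSeries.coeff_X_pow_mul', if_pos le_rfl, Nat.sub_self, hu]
    exact coeff_wordSeries τ (fun k => w k j) 0 (by omega)
  have hc2 : PowerSeries.coeff (R := F) τ (∑ a, (H' * transferMat M.A M.B M.C M.D) j a * u a)
      = 0 := by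
    have hswap : (∑ a, (H' * transferMat M.A M.B M.C M.D) j a * u a)
        = ∑ b, H' j b * (∑ a, transferMat M.A M.B M.C M.D b a * u a) := by
      simp_rw [Matrix.mul_apply, Finset.sum_mul, Finset.mul_sum, mul_assoc]
      rw [Finset.sum_comm]
    rw [hswap, map_sum]
    refine Finset.sum_eq_zero fun b _ => ?_
    rw [PowerSeries.coeff_mul, Finset.Nat.sum_antidiagonal_eq_sum_range_succ_mk]
    refine Finset.sum_eq_zero fun k hk => ?_
    have hz : PowerSeries.coeff (R := F) (τ - k) (∑ a, transferMat M.A M.B M.C M.D b a * u a) = 0 := by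
      rw [hu]
      rw [coeff_tmul M τ w b (τ - k) (by omega), h0 (τ - k) (by omega)]
      rfl
    rw [hz, mul_zero]
  rw [← key, hc2] at hc1
  rw [← hc1]
  rfl

end Coeffs


section Construct
open PowerSeries Matrix
variable {F : Type} [Field F] {ℓ m n : ℕ}

lemma exists_linear_factor {K V W₁ W₂ : Type*} [Field K] [AddCommGroup V] [Module K V]
    [AddCommGroup W₁] [Module K W₁] [AddCommGroup W₂] [Module K W₂]
    (f : V →ₗ[K] W₁) (g : V →ₗ[K] W₂) (hk : LinearMap.ker f ≤ LinearMap.ker g) :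
    ∃ ψ : W₁ →ₗ[K] W₂, ∀ v, ψ (f v) = g v := by
  obtain ⟨q, hq⟩ := Submodule.exists_isCompl (LinearMap.range f)
  set π := (LinearMap.range f).linearProjOfIsCompl q hq with hπ
  set e := f.quotKerEquivRange with he
  set gq := (LinearMap.ker f).liftQ g hk with hgq
  refine ⟨gq ∘ₗ (e.symm : LinearMap.range f →ₗ[K] V ⧸ LinearMap.ker f) ∘ₗ π, fun v => ?_⟩
  have h1 : π (f v) = ⟨f v, LinearMap.mem_range_self f v⟩ :=
    Submodule.linearProjOfIsCompl_apply_left hq ⟨f v, LinearMap.mem_range_self f v⟩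
  simp only [LinearMap.comp_apply, LinearEquiv.coe_coe]
  rw [h1, he, LinearMap.quotKerEquivRange_symm_apply_image]
  rw [hgq]
  exact Submodule.liftQ_apply _ g v

/-- The block-Toeplitz linear map sending truncated inputs to truncated outputs. -/
noncomputable def PhiMap (M : LFT F ℓ m n) (τ : ℕ) :
    (Fin (τ + 1) → Fin ℓ → F) →ₗ[F] (Fin (τ + 1) → Fin m → F) where
  toFun w := fun t => ∑ s : Fin (τ + 1),
    if (s : ℕ) ≤ (t : ℕ) then (Hc M.A M.B M.C M.D ((t : ℕ) - (s : ℕ))).mulVec (w s) else 0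
  map_add' w₁ w₂ := by
    funext t
    simp only [Pi.add_apply]
    rw [← Finset.sum_add_distrib]
    refine Finset.sum_congr rfl fun s _ => ?_
    split_ifs with hst
    · exact Matrix.mulVec_add _ _ _
    · rw [add_zero]
  map_smul' c w := by
    funext t
    simp only [Pi.smul_apply, RingHom.id_apply]
    rw [Finset.smul_sum]
    refine Finset.sum_congr rfl fun s _ => ?_
    split_ifs with hst
    · exact Matrix.mulVec_smul _ _ _
    · rw [smul_zero]

lemma exists_leftInv_of_goodKer (M : LFT F ℓ m n) (τ : ℕ) (hG : GoodKer M τ) :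
    ∃ H' : Matrix (Fin ℓ) (Fin m) (PowerSeries F), (∀ i j, IsRatPS (H' i j)) ∧
      H' * transferMat M.A M.B M.C M.D =
        ((PowerSeries.X : PowerSeries F) ^ τ) • (1 : Matrix (Fin ℓ) (Fin ℓ) (PowerSeries F)) := by
  classical
  -- Step 1: kernel of `PhiMap` determines the first letter
  have hker : LinearMap.ker (PhiMap M τ) ≤
      LinearMap.ker (LinearMap.proj (R := F) (φ := fun _ : Fin (τ + 1) => Fin ℓ → F) 0) := by
    intro w hw
    rw [LinearMap.mem_ker] at hw ⊢
    rw [LinearMap.proj_apply]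
    set w' : ℕ → Fin ℓ → F := fun k => if hk : k < τ + 1 then w ⟨k, hk⟩ else 0 with hw'
    have hsum : ∀ t ≤ τ,
        ∑ d ∈ Finset.range (t + 1), (Hc M.A M.B M.C M.D (t - d)).mulVec (w' d) = 0 := by
      intro t ht
      set f : ℕ → (Fin m → F) := fun d =>
        if hd : d < τ + 1 then
          (if d ≤ t then (Hc M.A M.B M.C M.D (t - d)).mulVec (w ⟨d, hd⟩) else 0)
        else 0 with hf
      have c1 : ∑ d ∈ Finset.range (t + 1), (Hc M.A M.B M.C M.D (t - d)).mulVec (w' d)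
          = ∑ d ∈ Finset.range (t + 1), f d := by
        refine Finset.sum_congr rfl fun d hd => ?_
        have hd1 : d < t + 1 := Finset.mem_range.1 hd
        have hdτ : d < τ + 1 := by omega
        simp only [hw', hf, dif_pos hdτ]
        rw [if_pos (by omega : d ≤ t)]
      have c2 : ∑ d ∈ Finset.range (t + 1), f d = ∑ d ∈ Finset.range (τ + 1), f d := by
        refine Finset.sum_subset (Finset.range_subset_range.2 (by omega)) fun d hd hnd => ?_
        have hnt : ¬ d ≤ t := by simp at hd hnd; omega
        simp only [hf]
        by_cases hdτ : d < τ + 1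
        · rw [dif_pos hdτ, if_neg hnt]
        · rw [dif_neg hdτ]
      have c3 : ∑ d ∈ Finset.range (τ + 1), f d = ∑ s : Fin (τ + 1), f s :=
        (Fin.sum_univ_eq_sum_range f (τ + 1)).symm
      have c4 : ∑ s : Fin (τ + 1), f s = PhiMap M τ w ⟨t, by omega⟩ := by
        refine Finset.sum_congr rfl fun sIdx _ => ?_
        simp only [hf]
        rw [dif_pos sIdx.isLt]
      rw [c1, c2, c3, c4, hw]
      rfl
    have := hG w' hsum
    have h0 : w' 0 = w 0 := by
      simp only [hw']
      rw [dif_pos (by omega : (0:ℕ) < τ + 1)]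
      exact congrArg w (Fin.ext (by simp))
    rw [← h0, this]
  -- Step 2: factor the projection through `PhiMap`
  obtain ⟨ψ, hψ⟩ := exists_linear_factor (PhiMap M τ)
    (LinearMap.proj (R := F) (φ := fun _ : Fin (τ + 1) => Fin ℓ → F) 0) hker
  -- Step 3: matrices of `ψ`
  set K : Fin (τ + 1) → Matrix (Fin ℓ) (Fin m) F := fun t =>
    LinearMap.toMatrix' (ψ ∘ₗ LinearMap.single F (fun _ : Fin (τ + 1) => Fin m → F) t) with hKdef
  have hK : ∀ (t : Fin (τ + 1)) (v : Fin m → F), (K t).mulVec v = ψ (Pi.single t v) := by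
    intro t v
    calc (K t).mulVec v = Matrix.toLin' (K t) v := (Matrix.toLin'_apply _ _).symm
      _ = (ψ ∘ₗ LinearMap.single F (fun _ : Fin (τ + 1) => Fin m → F) t) v := by
          rw [hKdef, Matrix.toLin'_toMatrix']
      _ = ψ (Pi.single t v) := rfl
  have hpsi : ∀ y : Fin (τ + 1) → Fin m → F, ψ y = ∑ t : Fin (τ + 1), (K t).mulVec (y t) := by
    intro y
    conv_lhs => rw [← Finset.univ_sum_single y]
    rw [map_sum]
    exact Finset.sum_congr rfl fun t _ => (hK t (y t)).symm
  -- Step 4: the finite family of matrix identities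
  have hid : ∀ (s : Fin (τ + 1)) (i j : Fin ℓ),
      (∑ t : Fin (τ + 1), if (s : ℕ) ≤ (t : ℕ) then
          (K t * Hc M.A M.B M.C M.D ((t : ℕ) - (s : ℕ))) i j else 0)
        = (if (s : ℕ) = 0 then (1 : Matrix (Fin ℓ) (Fin ℓ) F) i j else 0) := by
    intro s i j
    have hvec : ∀ v : Fin ℓ → F,
        (∑ t : Fin (τ + 1), if (s : ℕ) ≤ (t : ℕ) then
            (K t * Hc M.A M.B M.C M.D ((t : ℕ) - (s : ℕ))).mulVec v else 0)
          = if (0 : Fin (τ + 1)) = s then v else 0 := by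
      intro v
      have hPhi : PhiMap M τ (Pi.single s v) = fun t : Fin (τ + 1) => if (s : ℕ) ≤ (t : ℕ) then
          (Hc M.A M.B M.C M.D ((t : ℕ) - (s : ℕ))).mulVec v else 0 := by
        funext t
        have hunf : PhiMap M τ (Pi.single s v) t = ∑ s' : Fin (τ + 1),
            if (s' : ℕ) ≤ (t : ℕ) then
              (Hc M.A M.B M.C M.D ((t : ℕ) - (s' : ℕ))).mulVec ((Pi.single s v : Fin (τ + 1) → Fin ℓ → F) s') else 0 := rfl
        rw [hunf, Finset.sum_eq_single s]
        · rw [Pi.single_eq_same]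
        · intro s' _ hne
          rw [Pi.single_eq_of_ne hne, Matrix.mulVec_zero]
          split_ifs <;> rfl
        · intro habs
          exact absurd (Finset.mem_univ s) habs
      have h2 := hψ (Pi.single s v)
      rw [hPhi, hpsi] at h2
      have h3 : ∑ t : Fin (τ + 1), (K t).mulVec (if (s : ℕ) ≤ (t : ℕ) then
          (Hc M.A M.B M.C M.D ((t : ℕ) - (s : ℕ))).mulVec v else 0)
          = ∑ t : Fin (τ + 1), if (s : ℕ) ≤ (t : ℕ) then
            (K t * Hc M.A M.B M.C M.D ((t : ℕ) - (s : ℕ))).mulVec v else 0 := by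
        refine Finset.sum_congr rfl fun t _ => ?_
        split_ifs with h
        · rw [Matrix.mulVec_mulVec]
        · rw [Matrix.mulVec_zero]
      rw [h3] at h2
      rw [h2, LinearMap.proj_apply, Pi.single_apply]
    have := congrFun (hvec (Pi.single j 1)) i
    rw [Finset.sum_apply] at this
    have hL : ∀ t : Fin (τ + 1),
        ((if (s : ℕ) ≤ (t : ℕ) then
          (K t * Hc M.A M.B M.C M.D ((t : ℕ) - (s : ℕ))).mulVec (Pi.single j 1) else 0) i)
        = (if (s : ℕ) ≤ (t : ℕ) then
            (K t * Hc M.A M.B M.C M.D ((t : ℕ) - (s : ℕ))) i j else 0) := by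
      intro t
      split_ifs with h
      · show ((K t * Hc M.A M.B M.C M.D ((t : ℕ) - (s : ℕ))).mulVec (Pi.single j 1)) i = _
        simp [Matrix.mulVec, dotProduct, Pi.single_apply, mul_ite]
      · rfl
    rw [Finset.sum_congr rfl fun t _ => hL t] at this
    rw [this]
    rcases eq_or_ne (s : ℕ) 0 with hs | hs
    · have : (0 : Fin (τ + 1)) = s := by
        apply Fin.ext
        simp [hs]
      rw [if_pos this, if_pos hs]
      simp [Pi.single_apply, Matrix.one_apply, eq_comm]
    · have : ¬ ((0 : Fin (τ + 1)) = s) := by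
        intro h
        apply hs
        rw [← h]
        rfl
      rw [if_neg this, if_neg hs]
      rfl
  -- Step 5: the polynomial matrix `P` and its product `Q` with the transfer matrix
  set P : Matrix (Fin ℓ) (Fin m) (PowerSeries F) := ∑ t : Fin (τ + 1),
    ((PowerSeries.X : PowerSeries F) ^ (τ - (t : ℕ))) • (K t).map (PowerSeries.C (R := F)) with hPdef
  have hPentry : ∀ i j, P i j = ∑ t : Fin (τ + 1),
      (PowerSeries.X : PowerSeries F) ^ (τ - (t : ℕ)) * PowerSeries.C (R := F) (K t i j) := by
    intro i j
    rw [hPdef, Matrix.sum_apply]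
    exact Finset.sum_congr rfl fun t _ => by
      rw [Matrix.smul_apply, Matrix.map_apply, smul_eq_mul]
  have hPrat : ∀ i j, IsRatPS (P i j) := by
    intro i j
    rw [hPentry]
    refine mem_ratSubring.1 (Subring.sum_mem _ fun t _ => Subring.mul_mem _ ?_ ?_)
    · exact Subring.pow_mem _ (mem_ratSubring.2 isRatPS_X) _
    · exact mem_ratSubring.2 (isRatPS_C _)
  set Q := P * transferMat M.A M.B M.C M.D with hQdef
  have hQrat : ∀ i j, IsRatPS (Q i j) := by
    intro i j
    rw [hQdef, Matrix.mul_apply]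
    exact mem_ratSubring.1 (Subring.sum_mem _ fun a _ => Subring.mul_mem _
      (mem_ratSubring.2 (hPrat i a)) (mem_ratSubring.2 (isRatPS_transfer _ _ _ _ a j)))
  have hQcoeff : ∀ r, r ≤ τ → ∀ i j, PowerSeries.coeff (R := F) r (Q i j)
      = if r = τ then (1 : Matrix (Fin ℓ) (Fin ℓ) F) i j else 0 := by
    intro r hr i j
    have e1 : Q i j = ∑ a, ∑ t : Fin (τ + 1), (PowerSeries.X : PowerSeries F) ^ (τ - (t : ℕ)) *
        (PowerSeries.C (R := F) (K t i a) * transferMat M.A M.B M.C M.D a j) := by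
      rw [hQdef, Matrix.mul_apply]
      refine Finset.sum_congr rfl fun a _ => ?_
      rw [hPentry, Finset.sum_mul]
      exact Finset.sum_congr rfl fun t _ => by rw [mul_assoc]
    rw [e1, map_sum]
    have e2 : ∀ a : Fin m, PowerSeries.coeff (R := F) r (∑ t : Fin (τ + 1),
        (PowerSeries.X : PowerSeries F) ^ (τ - (t : ℕ)) *
          (PowerSeries.C (R := F) (K t i a) * transferMat M.A M.B M.C M.D a j))
        = ∑ t : Fin (τ + 1), if τ - (t : ℕ) ≤ r then
            K t i a * Hc M.A M.B M.C M.D (r - (τ - (t : ℕ))) a j else 0 := by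
      intro a
      rw [map_sum]
      refine Finset.sum_congr rfl fun t _ => ?_
      rw [PowerSeries.coeff_X_pow_mul']
      split_ifs with h
      · rw [PowerSeries.coeff_C_mul, transfer_coeff]
      · rfl
    rw [Finset.sum_congr rfl fun a _ => e2 a, Finset.sum_comm]
    set s₀ : Fin (τ + 1) := ⟨τ - r, by omega⟩ with hs₀
    have hs₀v : (s₀ : ℕ) = τ - r := rfl
    have e3 : ∀ t : Fin (τ + 1), (∑ a, if τ - (t : ℕ) ≤ r then
        K t i a * Hc M.A M.B M.C M.D (r - (τ - (t : ℕ))) a j else 0)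
        = if (s₀ : ℕ) ≤ (t : ℕ) then
            (K t * Hc M.A M.B M.C M.D ((t : ℕ) - (s₀ : ℕ))) i j else 0 := by
      intro t
      have htτ : (t : ℕ) < τ + 1 := t.isLt
      by_cases h : τ - (t : ℕ) ≤ r
      · rw [if_pos (by omega : (s₀ : ℕ) ≤ (t : ℕ))]
        have hexp : r - (τ - (t : ℕ)) = (t : ℕ) - (s₀ : ℕ) := by rw [hs₀v]; omega
        rw [Finset.sum_congr rfl fun a _ =>
          (by rw [if_pos h, hexp] : (if τ - (t : ℕ) ≤ r then
            K t i a * Hc M.A M.B M.C M.D (r - (τ - (t : ℕ))) a j else 0)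
            = K t i a * Hc M.A M.B M.C M.D ((t : ℕ) - (s₀ : ℕ)) a j)]
        rw [Matrix.mul_apply]
      · rw [if_neg (by rw [hs₀v]; omega)]
        exact Finset.sum_eq_zero fun a _ => if_neg h
    rw [Finset.sum_congr rfl fun t _ => e3 t, hid s₀ i j]
    by_cases h : r = τ
    · rw [if_pos (by rw [hs₀v]; omega), if_pos h]
    · rw [if_neg (by rw [hs₀v]; omega), if_neg h]
  -- Step 6: divide `Q` by `X ^ τ` and invert
  set N : Matrix (Fin ℓ) (Fin ℓ) (PowerSeries F) := Matrix.of fun i j =>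
    PowerSeries.mk fun k => PowerSeries.coeff (R := F) (k + τ) (Q i j) with hNdef
  have hQN : ∀ i j, Q i j = (PowerSeries.X : PowerSeries F) ^ τ * N i j := by
    intro i j
    apply PowerSeries.ext; intro k
    rw [PowerSeries.coeff_X_pow_mul']
    split_ifs with h
    · rw [hNdef]
      simp only [Matrix.of_apply, PowerSeries.coeff_mk]
      have hkτ : k - τ + τ = k := by omega
      rw [hkτ]
    · rw [hQcoeff k (by omega) i j, if_neg (by omega)]
  have hN0 : ∀ i j, PowerSeries.constantCoeff (R := F) (N i j)
      = (1 : Matrix (Fin ℓ) (Fin ℓ) F) i j := by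
    intro i j
    rw [hNdef]
    simp only [Matrix.of_apply]
    rw [← PowerSeries.coeff_zero_eq_constantCoeff_apply, PowerSeries.coeff_mk, zero_add,
      hQcoeff τ le_rfl i j, if_pos rfl]
  have hNrat : ∀ i j, IsRatPS (N i j) := by
    intro i j
    obtain ⟨p, g, hg, hfp⟩ := isRatPS_iff.1 (hQrat i j)
    have hdvd : (Polynomial.X : Polynomial F) ^ τ ∣ p := by
      rw [Polynomial.X_pow_dvd_iff]
      intro d hdτ
      rw [← Polynomial.coeff_coe, ← hfp, PowerSeries.coeff_mul,
        Finset.Nat.sum_antidiagonal_eq_sum_range_succ_mk]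
      refine Finset.sum_eq_zero fun k hk => ?_
      have hkd : k ≤ d := by simp at hk; omega
      rw [hQcoeff k (by omega) i j, if_neg (by omega), zero_mul]
    obtain ⟨p', hp'⟩ := hdvd
    rw [isRatPS_iff]
    refine ⟨p', g, hg, ?_⟩
    have hXpow : ((PowerSeries.X : PowerSeries F) ^ τ) ≠ 0 :=
      pow_ne_zero _ PowerSeries.X_ne_zero
    apply mul_left_cancel₀ hXpow
    calc (PowerSeries.X : PowerSeries F) ^ τ * (N i j * (g : PowerSeries F))
        = Q i j * (g : PowerSeries F) := by rw [← mul_assoc, ← hQN i j]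
      _ = (p : PowerSeries F) := hfp
      _ = (PowerSeries.X : PowerSeries F) ^ τ * (p' : PowerSeries F) := by
          rw [hp', Polynomial.coe_mul, Polynomial.coe_pow, Polynomial.coe_X]
  have hNdet : PowerSeries.constantCoeff (R := F) N.det ≠ 0 := by
    have hmap : N.map (PowerSeries.constantCoeff (R := F)) = (1 : Matrix (Fin ℓ) (Fin ℓ) F) := by
      ext a b
      rw [Matrix.map_apply, hN0]
    have : PowerSeries.constantCoeff (R := F) N.det = (N.map (PowerSeries.constantCoeff (R := F))).det := by
      rw [show N.map ⇑(PowerSeries.constantCoeff (R := F))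
          = (PowerSeries.constantCoeff (R := F)).mapMatrix N from rfl, ← RingHom.map_det]
    rw [this, hmap, Matrix.det_one]
    exact one_ne_zero
  have hNunit : IsUnit N.det := PowerSeries.isUnit_iff_constantCoeff.2
    (isUnit_iff_ne_zero.2 hNdet)
  refine ⟨N⁻¹ * P, ?_, ?_⟩
  · intro i j
    rw [Matrix.mul_apply]
    exact mem_ratSubring.1 (Subring.sum_mem _ fun b _ => Subring.mul_mem _
      (mem_ratSubring.2 (isRatPS_inv_entry hNrat hNdet i b)) (mem_ratSubring.2 (hPrat b j)))
  · have hQN' : Q = ((PowerSeries.X : PowerSeries F) ^ τ) • N := by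
      refine Matrix.ext fun i j => ?_
      rw [Matrix.smul_apply, smul_eq_mul]
      exact hQN i j
    rw [Matrix.mul_assoc, ← hQdef, hQN', Matrix.mul_smul, Matrix.nonsing_inv_mul _ hNunit]

end Construct


/-- an LFT `M` with transfer function matrix `H` is injective with delay
`τ` if and only if there is a matrix `H' ∈ M_{ℓ×m}(F[[z]])`, all of whose entries lie in
the image of the canonical embedding `F[z]_S → F[[z]]` (with `S = 1 + zF[z]`, i.e. each
entry is of the form `p·g⁻¹` with `p, g ∈ F[z]` and `g(0) = 1`), such that
`H'·H = z^τ·I`. -/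
theorem tauInjective_iff_exists_left_inverse {F : Type} [Field F] {ℓ m n : ℕ}
    (hℓ : 0 < ℓ) (hm : 0 < m) (hn : 0 < n) (M : LFT F ℓ m n) (τ : ℕ) :
    TauInjective M.del M.out τ ↔
      ∃ H' : Matrix (Fin ℓ) (Fin m) (PowerSeries F),
        (∀ (i : Fin ℓ) (j : Fin m), ∃ p g : Polynomial F, g.coeff 0 = 1 ∧
            H' i j = (p : PowerSeries F) * (g : PowerSeries F)⁻¹) ∧
          H' * transferMat M.A M.B M.C M.D =
            ((PowerSeries.X : PowerSeries F) ^ τ) • (1 : Matrix (Fin ℓ) (Fin ℓ) (PowerSeries F)) := by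
  constructor
  · intro h
    obtain ⟨H', hrat, hinv⟩ := exists_leftInv_of_goodKer M τ (goodKer_of_tauInjective M τ h)
    exact ⟨H', hrat, hinv⟩
  · rintro ⟨H', -, hinv⟩
    exact tauInjective_of_goodKer M τ (goodKer_of_leftInv M τ H' hinv)
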